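/- arXiv:2106.08173 — 2 statements merged into one kernel-verified Lean document; each statement's English description precedes it below -/
import Mathlib

section
/- Let R be a commutative noetherian ring, I an ideal of R, and X a chain complex of R-modules such that each module X_n is I-adically complete. If for some integer i one has I • H_i(X) = H_i(X), then H_i(X) = 0. -/
open Submodule

/-- Abstract completed Nakayama step: membership in `I^n • Z` can be improved. -/
theorem key_step {R : Type} {M N : Type*} [CommRing R] (I : Ideal R)
    [AddCommGroup M] [Module R M] [AddCommGroup N] [Module R N]
    (f : M →ₗ[R] N) (Z : Submodule R N)
    (hZ : Z ≤ I • Z ⊔ LinearMap.range f) (n : ℕ) (r : N) (hr : r ∈ I ^ n • Z) :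
    ∃ u : M, u ∈ (I ^ n • ⊤ : Submodule R M) ∧ r - f u ∈ I ^ (n + 1) • Z := by
  have hpow : (I ^ (n + 1) : Ideal R) • Z = I ^ n • (I • Z) := by
    rw [pow_succ, ← smul_eq_mul, Submodule.smul_assoc]
  refine Submodule.smul_induction_on hr (fun a ha x hx => ?_) (fun x y hx' hy' => ?_)
  ·
      obtain ⟨s, hs, m', hm', hx'⟩ := Submodule.mem_sup.1 (hZ hx)
      obtain ⟨m, rfl⟩ := hm'
      refine ⟨a • m, Submodule.smul_mem_smul ha trivial, ?_⟩
      rw [hpow, map_smul]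
      have : a • x - a • f m = a • s := by
        rw [← smul_sub]; congr 1; rw [← hx']; abel
      rw [this]
      exact Submodule.smul_mem_smul ha hs
  ·
      obtain ⟨u, hu, hu'⟩ := hx'
      obtain ⟨v, hv, hv'⟩ := hy'
      refine ⟨u + v, add_mem hu hv, ?_⟩
      have : x + y - f (u + v) = (x - f u) + (y - f v) := by rw [map_add]; abel
      rw [this]
      exact add_mem hu' hv'

/-- Abstract completed Nakayama. -/
theorem key_nakayama {R : Type} {M N : Type*} [CommRing R] (I : Ideal R)
    [AddCommGroup M] [Module R M] [AddCommGroup N] [Module R N]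
    [IsAdicComplete I M] [IsAdicComplete I N]
    (f : M →ₗ[R] N) (Z : Submodule R N)
    (hZ : Z ≤ I • Z ⊔ LinearMap.range f) :
    Z ≤ LinearMap.range f := by
  intro z hz
  -- build the approximating sequence
  have step : ∀ n (r : N), ∃ u : M,
      r ∈ I ^ n • Z → u ∈ (I ^ n • ⊤ : Submodule R M) ∧ r - f u ∈ I ^ (n + 1) • Z := by
    intro n r
    by_cases hr : r ∈ I ^ n • Z
    · obtain ⟨u, hu, hu'⟩ := key_step I f Z hZ n r hr
      exact ⟨u, fun _ => ⟨hu, hu'⟩⟩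
    · exact ⟨0, fun h => absurd h hr⟩
  choose u hu using step
  let y : ℕ → M := fun n => Nat.rec 0 (fun n yn => yn + u n (z - f yn)) n
  have hy0 : y 0 = 0 := rfl
  have hysucc : ∀ n, y (n + 1) = y n + u n (z - f (y n)) := fun n => rfl
  have hy : ∀ n, z - f (y n) ∈ I ^ n • Z := by
    intro n
    induction n with
    | zero => simpa [hy0, pow_zero, Ideal.one_eq_top, Submodule.top_smul] using hz
    | succ n ih =>
        have := (hu n (z - f (y n)) ih).2
        rw [hysucc, map_add]
        have e : z - (f (y n) + f (u n (z - f (y n)))) =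
            (z - f (y n)) - f (u n (z - f (y n))) := by abel
        rw [e]; exact this
  have hdiff : ∀ n, y (n + 1) - y n ∈ (I ^ n • ⊤ : Submodule R M) := by
    intro n
    have := (hu n (z - f (y n)) (hy n)).1
    rw [hysucc]
    simpa using this
  -- Cauchy condition
  have hcauchy : ∀ {m n : ℕ}, m ≤ n → y m ≡ y n [SMOD (I ^ m • ⊤ : Submodule R M)] := by
    intro m n hmn
    induction n, hmn using Nat.le_induction with
    | base => rfl
    | succ n hmn ih =>
        refine ih.trans (SModEq.symm ?_)
        rw [SModEq.sub_mem]
        exact Submodule.smul_mono_left (Ideal.pow_le_pow_right hmn) (hdiff n)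
  obtain ⟨L, hL⟩ := IsPrecomplete.prec (IsAdicComplete.toIsPrecomplete (I := I) (M := M)) hcauchy
  refine ⟨L, ?_⟩
  have hmain : ∀ n : ℕ, z - f L ∈ (I ^ n • ⊤ : Submodule R N) := by
    intro n
    have h1 : z - f (y n) ∈ (I ^ n • ⊤ : Submodule R N) :=
      Submodule.smul_mono le_rfl le_top (hy n)
    have h2 : y n - L ∈ (I ^ n • ⊤ : Submodule R M) := (SModEq.sub_mem).1 (hL n)
    have h3 : f (y n - L) ∈ (I ^ n • ⊤ : Submodule R N) := by
      have : f (y n - L) ∈ Submodule.map f (I ^ n • ⊤ : Submodule R M) :=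
        Submodule.mem_map_of_mem h2
      rw [Submodule.map_smul''] at this
      exact Submodule.smul_mono le_rfl le_top this
    have e : z - f L = (z - f (y n)) + f (y n - L) := by rw [map_sub]; abel
    rw [e]; exact add_mem h1 h3
  have := IsHausdorff.haus (IsAdicComplete.toIsHausdorff (I := I) (M := N)) (z - f L)
    (fun n => by rw [SModEq.zero]; exact hmain n)
  exact (sub_eq_zero.mp this).symm

/-- **Completed Nakayama (Simon).** Let `R` be a commutative noetherian ring, `I` an ideal
of `R`, and `X` a chain complex of `R`-modules such that each module `X n` is `I`-adically
complete.  If for some integer `i` one has `I • Hᵢ(X) = Hᵢ(X)`, then `Hᵢ(X) = 0`. -/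
theorem statement0 (R : Type) [CommRing R] [IsNoetherianRing R] (I : Ideal R)
    (X : ChainComplex (ModuleCat R) ℤ)
    (hcomplete : ∀ n : ℤ, IsAdicComplete I (X.X n))
    (i : ℤ)
    (h : I • (⊤ : Submodule R (X.homology i)) = ⊤) :
    Subsingleton (X.homology i) := by
  let S := X.sc i
  haveI : IsAdicComplete I S.X₁ := hcomplete _
  haveI : IsAdicComplete I S.X₂ := hcomplete _
  let e : (X.homology i : ModuleCat R) ≅ S.moduleCatLeftHomologyData.H := S.moduleCatHomologyIso
  let eq := e.toLinearEquiv
  -- transfer the hypothesis across the iso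
  have h' : I • (⊤ : Submodule R S.moduleCatLeftHomologyData.H) = ⊤ := by
    have := congrArg (Submodule.map (eq : X.homology i →ₗ[R] S.moduleCatLeftHomologyData.H)) h
    rwa [Submodule.map_smul'', Submodule.map_top, LinearEquiv.range] at this
  set Z : Submodule R S.X₂ := LinearMap.ker S.g.hom with hZdef
  set B : Submodule R Z := LinearMap.range S.moduleCatToCycles with hBdef
  have hZ : Z ≤ I • Z ⊔ LinearMap.range S.f.hom := by
    intro n hn
    set z : Z := ⟨n, hn⟩ with hzdef
    have hq : B.mkQ z ∈ (I • ⊤ : Submodule R (Z ⧸ B)) := by rw [show (I • ⊤ : Submodule R (Z ⧸ B)) = ⊤ from h']; exact Submodule.mem_top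
    have hmap : (I • ⊤ : Submodule R (Z ⧸ B)) = Submodule.map B.mkQ (I • ⊤ : Submodule R Z) := by
      rw [Submodule.map_smul'', Submodule.map_top, Submodule.range_mkQ]
    rw [hmap] at hq
    obtain ⟨w, hw, hwz⟩ := hq
    have hzw : z - w ∈ B := by
      rw [← Submodule.Quotient.mk_eq_zero] at *
      have : B.mkQ (z - w) = 0 := by rw [map_sub, hwz, sub_self]
      simpa [Submodule.mkQ_apply] using this
    obtain ⟨m, hm⟩ := hzw
    have hw1 : (w : S.X₂) ∈ I • Z := by
      have : (w : S.X₂) ∈ Submodule.map Z.subtype (I • ⊤ : Submodule R Z) :=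
        Submodule.mem_map_of_mem hw
      rwa [Submodule.map_smul'', Submodule.map_top, Submodule.range_subtype] at this
    have hn' : n = (w : S.X₂) + S.f m := by
      have := congrArg (Z.subtype) hm
      simp only [Submodule.subtype_apply] at this
      have h2 : (S.moduleCatToCycles m : S.X₂) = S.f m := rfl
      rw [h2] at this
      have : S.f m = n - (w : S.X₂) := by rw [this]; simp [hzdef]
      rw [this]; abel
    rw [hn']
    exact Submodule.add_mem_sup hw1 ⟨m, rfl⟩
  have hrange := key_nakayama (M := ↥S.X₁) (N := ↥S.X₂) I S.f.hom Z hZ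
  have hBtop : B = ⊤ := by
    rw [eq_top_iff]
    rintro ⟨n, hn⟩ _
    obtain ⟨m, hm⟩ := hrange hn
    exact ⟨m, Subtype.ext hm⟩
  haveI : Subsingleton S.moduleCatLeftHomologyData.H := by
    exact Submodule.Quotient.subsingleton_iff.2 hBtop
  exact Equiv.subsingleton eq.toEquiv
end

section
/- Let R be a commutative noetherian ring, I an ideal of R, X a chain complex of R-modules such that each module X_n is I-adically complete, and r an element of I. Let C denote the mapping cone of the chain map r·id_X : X → X given by multiplication by r. Then for every integer i, if H_j(C) = 0 for all j ≥ i, then H_j(X) = 0 for all j ≥ i. (Equivalently, the supremum of the degrees in which the homology of C is nonzero is at least the supremum of the degrees in which the homology of X is nonzero.) -/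
open CategoryTheory

/-- The relation of the complex shape `ComplexShape.down ℤ` is decidable. -/
instance : DecidableRel (ComplexShape.down ℤ).Rel :=
  fun a b => inferInstanceAs (Decidable (b + 1 = a))

/-- Any morphism of chain complexes of modules has a homotopy cofiber (mapping cone),
since the category of modules has binary biproducts. -/
instance (priority := 10000) {R : Type} [CommRing R] {X Y : ChainComplex (ModuleCat.{0} R) ℤ}
    (φ : X ⟶ Y) : HomologicalComplex.HasHomotopyCofiber φ :=
  ⟨fun _ _ _ => inferInstance⟩

lemma adic_core {R : Type} [CommRing R] {I : Ideal R} {r : R} (hr : r ∈ I)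
    {A B : Type} [AddCommGroup A] [Module R A] [AddCommGroup B] [Module R B]
    [IsAdicComplete I A] [IsAdicComplete I B]
    (d : A →ₗ[R] B) (P : B → Prop)
    (hstep : ∀ z, P z → ∃ x w, P x ∧ z = r • x + d w)
    (z : B) (hz : P z) : ∃ w, d w = z := by
  choose x w hPx heq using hstep
  let Z : ℕ → {b : B // P b} := fun n =>
    Nat.rec ⟨z, hz⟩ (fun _ p => ⟨x p.1 p.2, hPx p.1 p.2⟩) n
  have hZ0 : (Z 0).1 = z := rfl
  set Y : ℕ → A := fun n => w (Z n).1 (Z n).2 with hY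
  have hZrec : ∀ n, (Z n).1 = r • (Z (n+1)).1 + d (Y n) := fun n => heq _ _
  set s : ℕ → A := fun n => ∑ k ∈ Finset.range n, r ^ k • Y k with hs
  have key : ∀ n, z = r ^ n • (Z n).1 + d (s n) := by
    intro n
    induction n with
    | zero => simp [hs, hZ0]
    | succ n ih =>
      rw [ih, hZrec n]
      simp only [hs, Finset.sum_range_succ, map_add, map_smul, smul_add, smul_smul,
        pow_succ]
      abel
  have hterm : ∀ m k : ℕ, m ≤ k → r ^ k • Y k ∈ (I ^ m • ⊤ : Submodule R A) := by
    intro m k hmk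
    exact Submodule.smul_mem_smul (Ideal.pow_le_pow_right hmk (Ideal.pow_mem_pow hr k))
      Submodule.mem_top
  have hcauchy : ∀ {m n : ℕ}, m ≤ n → s m ≡ s n [SMOD (I ^ m • ⊤ : Submodule R A)] := by
    intro m n hmn
    rw [SModEq.sub_mem]
    have : s m - s n = -∑ k ∈ Finset.Ico m n, r ^ k • Y k := by
      simp only [hs]
      rw [← Finset.sum_range_add_sum_Ico _ hmn]
      abel
    rw [this]
    exact Submodule.neg_mem _ (Submodule.sum_mem _ fun k hk =>
      hterm m k (Finset.mem_Ico.mp hk).1)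
  obtain ⟨L, hL⟩ := IsPrecomplete.prec (IsAdicComplete.toIsPrecomplete (I := I) (M := A)) hcauchy
  refine ⟨L, ?_⟩
  have : ∀ n : ℕ, z - d L ≡ 0 [SMOD (I ^ n • ⊤ : Submodule R B)] := by
    intro n
    rw [SModEq.zero]
    have h1 : z - d L = r ^ n • (Z n).1 + d (s n - L) := by
      rw [map_sub]
      rw [key n]; abel
    rw [h1]
    refine Submodule.add_mem _ ?_ ?_
    · exact Submodule.smul_mem_smul (Ideal.pow_mem_pow hr n) Submodule.mem_top
    · have h2 : s n - L ∈ (I ^ n • ⊤ : Submodule R A) := (SModEq.sub_mem).mp (hL n)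
      have h3 : d (s n - L) ∈ Submodule.map d (I ^ n • ⊤ : Submodule R A) :=
        Submodule.mem_map_of_mem h2
      rw [Submodule.map_smul''] at h3
      exact Submodule.smul_mono le_rfl le_top h3
  have := IsHausdorff.haus (IsAdicComplete.toIsHausdorff (I := I) (M := B)) _ this
  exact (sub_eq_zero.mp this).symm

/-- Let `R` be a commutative noetherian ring, `I` an ideal, `X` a chain complex of `R`-modules
all of whose components are `I`-adically complete, `r ∈ I`, and `C` the mapping cone of the
chain map `r • 𝟙 X : X ⟶ X` given by multiplication by `r`.  Then for every integer `i`, if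
`Hⱼ(C) = 0` for all `j ≥ i`, then `Hⱼ(X) = 0` for all `j ≥ i`. -/
theorem statement1 (R : Type) [CommRing R] [IsNoetherianRing R] (I : Ideal R)
    (X : ChainComplex (ModuleCat.{0} R) ℤ)
    (hcomplete : ∀ n : ℤ, IsAdicComplete I (X.X n))
    (r : R) (hr : r ∈ I)
    (φ : X ⟶ X) (hφ : φ = r • 𝟙 X)
    (C : ChainComplex (ModuleCat.{0} R) ℤ)
    (hC : C = HomologicalComplex.homotopyCofiber φ)
    (i : ℤ) (h : ∀ j : ℤ, i ≤ j → Subsingleton (C.homology j)) :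
    ∀ j : ℤ, i ≤ j → Subsingleton (X.homology j) := by
  subst hC
  intro j hj
  haveI := hcomplete j
  haveI := hcomplete (j+1)
  haveI := h j hj
  have hDz : Limits.IsZero ((HomologicalComplex.homotopyCofiber φ).homology j) :=
    ModuleCat.isZero_of_subsingleton _
  rw [← HomologicalComplex.exactAt_iff_isZero_homology,
    HomologicalComplex.exactAt_iff' _ (j+1) j (j-1) (ChainComplex.prev ℤ j)
      (ChainComplex.next ℤ j),
    ShortComplex.moduleCat_exact_iff] at hDz
  have hrel1 : (ComplexShape.down ℤ).Rel (j+1) j := rfl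
  have hrel2 : (ComplexShape.down ℤ).Rel j (j-1) := by simp
  have hstep : ∀ z : X.X j, X.d j (j-1) z = 0 →
      ∃ x y, X.d j (j-1) x = 0 ∧ z = r • x + X.d (j+1) j y := by
    intro z hz
    obtain ⟨e, he⟩ := hDz (HomologicalComplex.homotopyCofiber.inrX φ j z) (by
      have h1 := congrArg (fun f => f z)
        (HomologicalComplex.homotopyCofiber.inrX_d φ j (j-1))
      simp only [comp_apply] at h1
      dsimp at h1 ⊢
      erw [h1, hz, map_zero]; rfl)
    have he2 : HomologicalComplex.homotopyCofiber.d φ (j+1) j e =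
        HomologicalComplex.homotopyCofiber.inrX φ j z := he
    refine ⟨HomologicalComplex.homotopyCofiber.fstX φ (j+1) j hrel1 e,
      HomologicalComplex.homotopyCofiber.sndX φ (j+1) e, ?_, ?_⟩
    · have h2 := congrArg (fun f => f e)
        (HomologicalComplex.homotopyCofiber.d_fstX φ (j+1) j (j-1) hrel1 hrel2)
      simp only [comp_apply, LinearMap.neg_apply] at h2
      dsimp at h2
      erw [Function.comp_apply, he2] at h2
      have h3 := congrArg (fun f => f z)
        (HomologicalComplex.homotopyCofiber.inrX_fstX φ j (j-1) hrel2)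
      simp only [comp_apply] at h3
      dsimp at h3
      rw [h3] at h2
      exact (neg_eq_zero.mp h2.symm)
    · have h4 := congrArg (fun f => f e)
        (HomologicalComplex.homotopyCofiber.d_sndX φ (j+1) j hrel1)
      simp only [comp_apply, LinearMap.add_apply] at h4
      dsimp at h4
      erw [Function.comp_apply, he2] at h4
      have h5 := congrArg (fun f => f z)
        (HomologicalComplex.homotopyCofiber.inrX_sndX φ j)
      simp only [comp_apply] at h5
      dsimp at h5
      rw [h5] at h4
      rw [h4, hφ]
      simp
      rfl
  have hex : X.ExactAt j := by
    rw [HomologicalComplex.exactAt_iff' X (j+1) j (j-1) (ChainComplex.prev ℤ j)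
      (ChainComplex.next ℤ j), ShortComplex.moduleCat_exact_iff]
    intro z hz
    obtain ⟨w, hw⟩ := adic_core hr (X.d (j+1) j).hom (fun b => X.d j (j-1) b = 0)
      (fun z hz => by
        obtain ⟨x, y, hx, hxy⟩ := hstep z hz
        exact ⟨x, y, hx, hxy⟩) z hz
    exact ⟨w, hw⟩
  rw [HomologicalComplex.exactAt_iff_isZero_homology] at hex
  refine ⟨fun a b => ?_⟩
  have h0 : (𝟙 (X.homology j) : _ ⟶ _) = 0 := hex.eq_of_src _ _
  have ha := congrArg (fun f => f a) h0
  have hb := congrArg (fun f => f b) h0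
  simp only [ModuleCat.id_apply] at ha hb
  rw [ha, hb]
  rfl
end
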